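/- Let u : Ω ⊂ ℝⁿ → ℝ^m be C² with metric g = I + DuᵀDu. If u satisfies the non-divergence form system √(det g) ∑ g^{ij} ∂ᵢⱼu^α = f^α + (f · ∂ⱼu) ∂ⱼu^α (summed over j) for all α, then u satisfies the inner variation identity ∑ᵢ ∂ᵢ(√(det g) g^{ij}) = −∂ⱼu · f for each j, and hence the divergence form system ∑ᵢ ∂ᵢ(√(det g) g^{ij} ∂ⱼu^α) = f^α. -/

import Mathlib

noncomputable section
open Matrix

/-- Partial derivative `∂ᵢφ(x)`. -/
def pd {n : ℕ} (φ : (Fin n → ℝ) → ℝ) (i : Fin n) (x : Fin n → ℝ) : ℝ :=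
  fderiv ℝ φ x (Pi.single i 1)

/-- The Jacobian matrix `Du(x)`. -/
def Jac {n m : ℕ} (u : (Fin n → ℝ) → Fin m → ℝ) (x : Fin n → ℝ) :
    Matrix (Fin m) (Fin n) ℝ :=
  Matrix.of fun α i => fderiv ℝ (fun y => u y α) x (Pi.single i 1)

/-- The induced metric `g = I + DuᵀDu`. -/
def gmet {n m : ℕ} (u : (Fin n → ℝ) → Fin m → ℝ) (x : Fin n → ℝ) :
    Matrix (Fin n) (Fin n) ℝ :=
  1 + (Jac u x)ᵀ * Jac u x

/-- The inverse metric entries `g^{ij}`. -/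
def ginv {n m : ℕ} (u : (Fin n → ℝ) → Fin m → ℝ) (x : Fin n → ℝ) (i j : Fin n) : ℝ :=
  ((gmet u x)⁻¹ : Matrix (Fin n) (Fin n) ℝ) i j

namespace IVaux
variable {n : ℕ} {x : Fin n → ℝ}

def toL (c : Fin n → ℝ) : (Fin n → ℝ) →L[ℝ] ℝ :=
  ∑ i, c i • ContinuousLinearMap.proj i

lemma toL_apply (c : Fin n → ℝ) (v : Fin n → ℝ) : toL c v = ∑ i, c i * v i := by
  simp [toL, ContinuousLinearMap.sum_apply, smul_eq_mul]

lemma toL_single (c : Fin n → ℝ) (k : Fin n) : toL c (Pi.single k 1) = c k := by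
  rw [toL_apply]
  simp [Pi.single_apply]

def HasPD (φ : (Fin n → ℝ) → ℝ) (x : Fin n → ℝ) (c : Fin n → ℝ) : Prop :=
  HasFDerivAt φ (toL c) x

lemma HasPD.pd_eq {φ : (Fin n → ℝ) → ℝ} {c : Fin n → ℝ} (h : HasPD φ x c) (i : Fin n) :
    pd φ i x = c i := by
  rw [pd, h.fderiv, toL_single]

lemma HasPD.diff {φ : (Fin n → ℝ) → ℝ} {c : Fin n → ℝ} (h : HasPD φ x c) :
    DifferentiableAt ℝ φ x := h.differentiableAt

lemma hasPD_of_differentiableAt {φ : (Fin n → ℝ) → ℝ} (h : DifferentiableAt ℝ φ x) :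
    HasPD φ x (fun i => pd φ i x) := by
  have hL : toL (fun i => pd φ i x) = fderiv ℝ φ x := by
    refine ContinuousLinearMap.ext fun v => ?_
    rw [toL_apply]
    have hv : v = ∑ i, v i • (Pi.single i 1 : Fin n → ℝ) := by
      funext j; simp [Pi.single_apply]
    calc ∑ i, pd φ i x * v i = ∑ i, v i • fderiv ℝ φ x (Pi.single i 1) := by
          simp [pd, smul_eq_mul, mul_comm]
      _ = fderiv ℝ φ x (∑ i, v i • (Pi.single i 1 : Fin n → ℝ)) := by
          rw [map_sum]; simp
      _ = fderiv ℝ φ x v := by rw [← hv]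
  rw [HasPD, hL]
  exact h.hasFDerivAt

lemma toL_congr {c c' : Fin n → ℝ} (h : ∀ i, c i = c' i) : toL c = toL c' := by
  have : c = c' := funext h
  rw [this]

lemma HasPD.congr_pd {φ : (Fin n → ℝ) → ℝ} {c c' : Fin n → ℝ} (h : HasPD φ x c)
    (hc : ∀ i, c i = c' i) : HasPD φ x c' := by
  rw [HasPD, ← toL_congr hc]; exact h

lemma HasPD.congr_fun {φ ψ : (Fin n → ℝ) → ℝ} {c : Fin n → ℝ} (h : HasPD φ x c)
    (he : ∀ y, ψ y = φ y) : HasPD ψ x c := by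
  have : ψ = φ := funext he
  rw [HasPD, this]; exact h

lemma hasPD_const (x : Fin n → ℝ) (r : ℝ) : HasPD (fun _ => r) x (fun _ => 0) := by
  have : toL (fun _ : Fin n => (0:ℝ)) = 0 := by
    refine ContinuousLinearMap.ext fun v => ?_
    simp [toL_apply]
  rw [HasPD, this]
  exact hasFDerivAt_const r x

lemma HasPD.add {φ ψ : (Fin n → ℝ) → ℝ} {c c' : Fin n → ℝ} (h : HasPD φ x c)
    (h' : HasPD ψ x c') : HasPD (fun y => φ y + ψ y) x (fun i => c i + c' i) := by
  have hL : toL (fun i => c i + c' i) = toL c + toL c' := by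
    refine ContinuousLinearMap.ext fun v => ?_
    simp [toL_apply, add_mul, Finset.sum_add_distrib]
  rw [HasPD, hL]
  exact HasFDerivAt.add h h'

lemma HasPD.mul {φ ψ : (Fin n → ℝ) → ℝ} {c c' : Fin n → ℝ} (h : HasPD φ x c)
    (h' : HasPD ψ x c') :
    HasPD (fun y => φ y * ψ y) x (fun i => φ x * c' i + ψ x * c i) := by
  have hL : toL (fun i => φ x * c' i + ψ x * c i) = φ x • toL c' + ψ x • toL c := by
    refine ContinuousLinearMap.ext fun v => ?_
    simp [toL_apply, add_mul, Finset.sum_add_distrib, Finset.mul_sum, mul_assoc]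
  rw [HasPD, hL]
  exact HasFDerivAt.mul h h'

lemma HasPD.fun_sum {ι : Type*} {s : Finset ι} {f : ι → (Fin n → ℝ) → ℝ}
    {f' : ι → Fin n → ℝ} (h : ∀ a ∈ s, HasPD (f a) x (f' a)) :
    HasPD (fun y => ∑ a ∈ s, f a y) x (fun i => ∑ a ∈ s, f' a i) := by
  have hL : toL (fun i => ∑ a ∈ s, f' a i) = ∑ a ∈ s, toL (f' a) := by
    refine ContinuousLinearMap.ext fun v => ?_
    simp [toL_apply, Finset.sum_mul, ContinuousLinearMap.sum_apply]
    rw [Finset.sum_comm]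
  rw [HasPD, hL]
  exact HasFDerivAt.fun_sum h

lemma HasPD.const_mul {φ : (Fin n → ℝ) → ℝ} {c : Fin n → ℝ} (h : HasPD φ x c) (r : ℝ) :
    HasPD (fun y => r * φ y) x (fun i => r * c i) :=
  ((hasPD_const x r).mul h).congr_pd (by intro i; simp)

lemma HasPD.neg {φ : (Fin n → ℝ) → ℝ} {c : Fin n → ℝ} (h : HasPD φ x c) :
    HasPD (fun y => -φ y) x (fun i => -c i) :=
  (h.const_mul (-1)).congr_pd (by intro i; ring) |>.congr_fun (by intro y; ring)

lemma HasPD.sqrt {φ : (Fin n → ℝ) → ℝ} {c : Fin n → ℝ} (h : HasPD φ x c)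
    (hx : φ x ≠ 0) :
    HasPD (fun y => Real.sqrt (φ y)) x (fun i => c i / (2 * Real.sqrt (φ x))) := by
  have := HasFDerivAt.sqrt h hx
  have hL : toL (fun i => c i / (2 * Real.sqrt (φ x)))
      = (1 / (2 * Real.sqrt (φ x))) • toL c := by
    refine ContinuousLinearMap.ext fun v => ?_
    simp only [toL_apply, ContinuousLinearMap.coe_smul', Pi.smul_apply, smul_eq_mul,
      Finset.mul_sum]
    refine Finset.sum_congr rfl fun i _ => by ring
  rw [HasPD, hL]
  exact this

lemma HasPD.fun_prod {ι : Type*} [DecidableEq ι] {s : Finset ι}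
    {f : ι → (Fin n → ℝ) → ℝ} {f' : ι → Fin n → ℝ}
    (h : ∀ a ∈ s, HasPD (f a) x (f' a)) :
    HasPD (fun y => ∏ a ∈ s, f a y) x
      (fun i => ∑ a ∈ s, (∏ b ∈ s.erase a, f b x) * f' a i) := by
  classical
  induction s using Finset.induction_on with
  | empty =>
      refine ((hasPD_const x 1).congr_fun (by simp)).congr_pd (by simp)
  | @insert a s ha ih =>
      have hmul := (h a (Finset.mem_insert_self a s)).mul
        (ih (fun b hb => h b (Finset.mem_insert_of_mem hb)))
      refine (hmul.congr_fun (fun y => ?_)).congr_pd (fun i => ?_)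
      · rw [Finset.prod_insert ha]
      · rw [Finset.sum_insert ha, Finset.erase_insert ha]
        have : ∀ b ∈ s, (∏ c ∈ (insert a s).erase b, f c x) * f' b i
            = f a x * ((∏ c ∈ s.erase b, f c x) * f' b i) := by
          intro b hb
          have hba : a ≠ b := fun hab => ha (hab ▸ hb)
          rw [Finset.erase_insert_of_ne hba,
            Finset.prod_insert (fun hmem => ha (Finset.mem_of_mem_erase hmem))]
          ring
        rw [Finset.sum_congr rfl this, ← Finset.mul_sum]
        ring

lemma hasPD_det {N : ℕ} {G : (Fin n → ℝ) → Matrix (Fin N) (Fin N) ℝ}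
    {G' : Fin N → Fin N → Fin n → ℝ}
    (h : ∀ k l, HasPD (fun y => G y k l) x (G' k l)) :
    HasPD (fun y => (G y).det) x
      (fun i => ∑ l, ∑ r, (G x).adjugate l r * G' r l i) := by
  classical
  have hterm : ∀ σ : Equiv.Perm (Fin N),
      HasPD (fun y => Equiv.Perm.sign σ • ∏ k, G y (σ k) k) x
        (fun i => (Equiv.Perm.sign σ : ℤ) *
          ∑ l, (∏ k ∈ Finset.univ.erase l, G x (σ k) k) * G' (σ l) l i) := by
    intro σ
    have hp := HasPD.fun_prod (s := Finset.univ)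
      (f := fun k y => G y (σ k) k) (f' := fun k => G' (σ k) k)
      (fun k _ => h (σ k) k)
    have := hp.const_mul ((Equiv.Perm.sign σ : ℤ) : ℝ)
    refine this.congr_fun (fun y => ?_)
    simp [Units.smul_def, zsmul_eq_mul]
  have hsum := HasPD.fun_sum (s := Finset.univ) (f' := fun σ i =>
      (Equiv.Perm.sign σ : ℤ) *
        ∑ l, (∏ k ∈ Finset.univ.erase l, G x (σ k) k) * G' (σ l) l i)
    (fun σ _ => hterm σ)
  refine (hsum.congr_fun (fun y => ?_)).congr_pd (fun i => ?_)
  · rw [Matrix.det_apply]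
  · -- ∑ σ, sign σ * ∑ l ... = ∑ l, ∑ r, adj l r * G' r l i
    have key : ∀ l : Fin N,
        ∑ σ : Equiv.Perm (Fin N), ((Equiv.Perm.sign σ : ℤ) : ℝ) *
            ((∏ k ∈ Finset.univ.erase l, G x (σ k) k) * G' (σ l) l i)
          = ∑ r, (G x).adjugate l r * G' r l i := by
      intro l
      have hcr : ∑ r, (G x).adjugate l r * G' r l i
          = ((G x).updateCol l (fun r => G' r l i)).det := by
        have := Matrix.cramer_eq_adjugate_mulVec (G x) (fun r => G' r l i)
        have h2 := congrFun this l
        rw [Matrix.cramer_apply] at h2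
        rw [h2]
        simp [Matrix.mulVec, dotProduct]
      rw [hcr, Matrix.det_apply]
      refine Finset.sum_congr rfl fun σ _ => ?_
      have hsplit : ∏ k, ((G x).updateCol l (fun r => G' r l i)) (σ k) k
          = G' (σ l) l i * ∏ k ∈ Finset.univ.erase l, G x (σ k) k := by
        rw [← Finset.mul_prod_erase Finset.univ _ (Finset.mem_univ l)]
        congr 1
        · simp [Matrix.updateCol_apply]
        · refine Finset.prod_congr rfl fun k hk => ?_
          rw [Matrix.updateCol_apply, if_neg (Finset.ne_of_mem_erase hk)]
      rw [hsplit]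
      simp only [Units.smul_def, zsmul_eq_mul]
      ring
    calc ∑ σ : Equiv.Perm (Fin N), ((Equiv.Perm.sign σ : ℤ) : ℝ) *
          ∑ l, (∏ k ∈ Finset.univ.erase l, G x (σ k) k) * G' (σ l) l i
        = ∑ σ : Equiv.Perm (Fin N), ∑ l, ((Equiv.Perm.sign σ : ℤ) : ℝ) *
            ((∏ k ∈ Finset.univ.erase l, G x (σ k) k) * G' (σ l) l i) := by
          refine Finset.sum_congr rfl fun σ _ => by rw [Finset.mul_sum]
      _ = ∑ l, ∑ σ : Equiv.Perm (Fin N), ((Equiv.Perm.sign σ : ℤ) : ℝ) *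
            ((∏ k ∈ Finset.univ.erase l, G x (σ k) k) * G' (σ l) l i) :=
          Finset.sum_comm
      _ = ∑ l, ∑ r, (G x).adjugate l r * G' r l i := by
          exact Finset.sum_congr rfl fun l _ => key l

lemma sum_comm_mid {ι κ μ : Type*} [Fintype ι] [Fintype κ] [Fintype μ]
    (f : ι → κ → μ → ℝ) :
    ∑ a, ∑ b, ∑ c, f a b c = ∑ a, ∑ c, ∑ b, f a b c :=
  Finset.sum_congr rfl fun a _ => Finset.sum_comm

lemma algebra1 {n m : ℕ} (B Gx : Matrix (Fin n) (Fin n) ℝ)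
    (p : Fin m → Fin n → ℝ) (q : Fin m → Fin n → Fin n → ℝ)
    (s0 : ℝ) (fa : Fin m → ℝ) (F : Fin n → ℝ)
    (hBsym : ∀ a b, B a b = B b a)
    (hqsym : ∀ α a b, q α a b = q α b a)
    (hinv : ∀ a b, ∑ r, Gx a r * B r b = if a = b then 1 else 0)
    (hGx : ∀ a b, Gx a b = (if a = b then 1 else 0) + ∑ α, p α a * p α b)
    (hF : ∀ t, F t = ∑ β, fa β * p β t)
    (hmain : ∀ α, s0 * ∑ i, ∑ l, B i l * q α l i = fa α + ∑ t, F t * p α t)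
    (j : Fin n) :
    ∑ i, (s0 * (-∑ t, ∑ r, B i t * (∑ α, (p α t * q α r i + p α r * q α t i)) * B r j)
        + B i j * ((s0 / 2) * ∑ l, ∑ r, B l r * (∑ α, (p α r * q α l i + p α l * q α r i))))
      = -∑ α, p α j * fa α := by
  classical
  have hGxsym : ∀ a b, Gx a b = Gx b a := by
    intro a b
    rw [hGx, hGx]
    congr 1
    · simp [eq_comm]
    · exact Finset.sum_congr rfl fun α _ => mul_comm _ _
  set Xi : Fin n → ℝ := fun i => ∑ l, ∑ r, ∑ α, B i j * B l r * p α r * q α l i with hXi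
  set U1i : Fin n → ℝ := fun i => ∑ t, ∑ r, ∑ α, B i t * B r j * p α r * q α t i with hU1i
  set U2i : Fin n → ℝ := fun i => ∑ t, ∑ r, ∑ α, B i t * B r j * p α t * q α r i with hU2i
  have expand2 : ∀ i, ∑ t, ∑ r, B i t * (∑ α, (p α t * q α r i + p α r * q α t i)) * B r j
      = U1i i + U2i i := by
    intro i
    calc ∑ t, ∑ r, B i t * (∑ α, (p α t * q α r i + p α r * q α t i)) * B r j
        = ∑ t, ∑ r, ∑ α, (B i t * B r j * p α r * q α t i
            + B i t * B r j * p α t * q α r i) := by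
          refine Finset.sum_congr rfl fun t _ => Finset.sum_congr rfl fun r _ => ?_
          rw [Finset.mul_sum, Finset.sum_mul]
          exact Finset.sum_congr rfl fun α _ => by ring
      _ = U1i i + U2i i := by
          simp only [hU1i, hU2i, Finset.sum_add_distrib]
  have expand1 : ∀ i, B i j * ((s0 / 2) * ∑ l, ∑ r, B l r *
        (∑ α, (p α r * q α l i + p α l * q α r i))) = s0 * Xi i := by
    intro i
    have e : ∑ l, ∑ r, B l r * (∑ α, (p α r * q α l i + p α l * q α r i))
        = (∑ l, ∑ r, ∑ α, B l r * p α r * q α l i)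
          + (∑ l, ∑ r, ∑ α, B l r * p α l * q α r i) := by
      calc ∑ l, ∑ r, B l r * (∑ α, (p α r * q α l i + p α l * q α r i))
          = ∑ l, ∑ r, ∑ α, (B l r * p α r * q α l i + B l r * p α l * q α r i) := by
            refine Finset.sum_congr rfl fun l _ => Finset.sum_congr rfl fun r _ => ?_
            rw [Finset.mul_sum]
            exact Finset.sum_congr rfl fun α _ => by ring
        _ = _ := by simp only [Finset.sum_add_distrib]
    have e2 : (∑ l, ∑ r, ∑ α, B l r * p α l * q α r i)
        = ∑ l, ∑ r, ∑ α, B l r * p α r * q α l i := by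
      rw [Finset.sum_comm]
      refine Finset.sum_congr rfl fun l _ => Finset.sum_congr rfl fun r _ =>
        Finset.sum_congr rfl fun α _ => ?_
      rw [hBsym]
    have e3 : Xi i = B i j * ∑ l, ∑ r, ∑ α, B l r * p α r * q α l i := by
      rw [hXi]
      simp only [Finset.mul_sum]
      refine Finset.sum_congr rfl fun l _ => Finset.sum_congr rfl fun r _ =>
        Finset.sum_congr rfl fun α _ => by ring
    rw [e, e2, e3]
    ring
  have step1 : ∑ i, (s0 * (-∑ t, ∑ r, B i t *
        (∑ α, (p α t * q α r i + p α r * q α t i)) * B r j)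
      + B i j * ((s0 / 2) * ∑ l, ∑ r, B l r *
        (∑ α, (p α r * q α l i + p α l * q α r i))))
      = s0 * (∑ i, Xi i) - s0 * (∑ i, U1i i) - s0 * (∑ i, U2i i) := by
    calc ∑ i, (s0 * (-∑ t, ∑ r, B i t *
          (∑ α, (p α t * q α r i + p α r * q α t i)) * B r j)
        + B i j * ((s0 / 2) * ∑ l, ∑ r, B l r *
          (∑ α, (p α r * q α l i + p α l * q α r i))))
        = ∑ i, (s0 * Xi i - s0 * U1i i - s0 * U2i i) := by
          refine Finset.sum_congr rfl fun i _ => ?_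
          rw [expand1 i, expand2 i]
          ring
      _ = _ := by
          simp only [Finset.sum_sub_distrib, ← Finset.mul_sum]
  have hXU2 : ∑ i, Xi i = ∑ i, U2i i := by
    have e : ∀ i, Xi i = ∑ l, ∑ r, ∑ α, B l r * B i j * p α r * q α i l := by
      intro i
      refine Finset.sum_congr rfl fun l _ => Finset.sum_congr rfl fun r _ =>
        Finset.sum_congr rfl fun α _ => ?_
      rw [hqsym]
      ring
    calc ∑ i, Xi i = ∑ i, ∑ l, ∑ r, ∑ α, B l r * B i j * p α r * q α i l := by
          exact Finset.sum_congr rfl fun i _ => e i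
      _ = ∑ l, ∑ i, ∑ r, ∑ α, B l r * B i j * p α r * q α i l := Finset.sum_comm
      _ = ∑ l, ∑ r, ∑ i, ∑ α, B l r * B i j * p α r * q α i l := by
          exact Finset.sum_congr rfl fun l _ => Finset.sum_comm
      _ = ∑ i, U2i i := rfl
  have hU1sum : s0 * (∑ i, U1i i)
      = ∑ α, (∑ r, B r j * p α r) * (fa α + ∑ t, F t * p α t) := by
    have e0 : ∑ i, U1i i = ∑ α, ∑ r, ∑ i, ∑ t, (B r j * p α r) * (B i t * q α t i) := by
      calc ∑ i, U1i i
          = ∑ i, ∑ t, ∑ α, ∑ r, B i t * B r j * p α r * q α t i := by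
            exact Finset.sum_congr rfl fun i _ => sum_comm_mid _
        _ = ∑ i, ∑ α, ∑ t, ∑ r, B i t * B r j * p α r * q α t i := by
            exact sum_comm_mid _
        _ = ∑ α, ∑ i, ∑ t, ∑ r, B i t * B r j * p α r * q α t i := Finset.sum_comm
        _ = ∑ α, ∑ i, ∑ r, ∑ t, B i t * B r j * p α r * q α t i := by
            exact Finset.sum_congr rfl fun α _ => sum_comm_mid _
        _ = ∑ α, ∑ r, ∑ i, ∑ t, B i t * B r j * p α r * q α t i := by
            exact Finset.sum_congr rfl fun α _ => Finset.sum_comm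
        _ = ∑ α, ∑ r, ∑ i, ∑ t, (B r j * p α r) * (B i t * q α t i) := by
            refine Finset.sum_congr rfl fun α _ => Finset.sum_congr rfl fun r _ =>
              Finset.sum_congr rfl fun i _ => Finset.sum_congr rfl fun t _ => by ring
    rw [e0, Finset.mul_sum]
    refine Finset.sum_congr rfl fun α _ => ?_
    rw [← hmain α]
    have epull : ∀ r, ∑ i, ∑ t, (B r j * p α r) * (B i t * q α t i)
        = (B r j * p α r) * ∑ i, ∑ t, B i t * q α t i := by
      intro r
      rw [Finset.mul_sum]
      exact Finset.sum_congr rfl fun i _ => (Finset.mul_sum _ _ _).symm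
    rw [Finset.sum_congr rfl fun r _ => epull r, ← Finset.sum_mul]
    ring
  have hpp : ∀ a b, ∑ α, p α a * p α b = Gx a b - (if a = b then 1 else 0) := by
    intro a b
    rw [hGx]
    ring
  have hfinal : ∑ α, (∑ r, B r j * p α r) * (fa α + ∑ t, F t * p α t)
      = ∑ α, p α j * fa α := by
    have hT : ∀ α, (∑ r, B r j * p α r) * (fa α + ∑ t, F t * p α t)
        = (∑ r, B r j * p α r * fa α) + ∑ t, ∑ r, F t * (B r j * (p α r * p α t)) := by
      intro α
      rw [mul_add, Finset.sum_mul, Finset.sum_mul_sum]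
      congr 1
      rw [Finset.sum_comm]
      refine Finset.sum_congr rfl fun t _ => Finset.sum_congr rfl fun r _ => by ring
    calc ∑ α, (∑ r, B r j * p α r) * (fa α + ∑ t, F t * p α t)
        = (∑ α, ∑ r, B r j * p α r * fa α)
          + ∑ α, ∑ t, ∑ r, F t * (B r j * (p α r * p α t)) := by
          rw [← Finset.sum_add_distrib]
          exact Finset.sum_congr rfl fun α _ => hT α
      _ = (∑ r, B r j * F r) + ∑ t, F t * ((if t = j then 1 else 0) - B t j) := by
          congr 1
          · rw [Finset.sum_comm]
            refine Finset.sum_congr rfl fun r _ => ?_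
            rw [hF r, Finset.mul_sum]
            exact Finset.sum_congr rfl fun β _ => by ring
          · calc ∑ α, ∑ t, ∑ r, F t * (B r j * (p α r * p α t))
                = ∑ t, ∑ r, ∑ α, F t * (B r j * (p α r * p α t)) := by
                  rw [Finset.sum_comm]
                  exact Finset.sum_congr rfl fun t _ => Finset.sum_comm
              _ = ∑ t, F t * ((∑ r, Gx t r * B r j) - B t j) := by
                  refine Finset.sum_congr rfl fun t _ => ?_
                  have hr : ∀ r, ∑ α, F t * (B r j * (p α r * p α t))
                      = F t * (Gx t r * B r j) - (if r = t then F t * B r j else 0) := by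
                    intro r
                    calc ∑ α, F t * (B r j * (p α r * p α t))
                        = F t * (B r j * ∑ α, p α r * p α t) := by
                          simp only [Finset.mul_sum]
                      _ = F t * (B r j * (Gx r t - (if r = t then 1 else 0))) := by
                          rw [hpp r t]
                      _ = F t * (Gx t r * B r j) - (if r = t then F t * B r j else 0) := by
                          rw [hGxsym t r]
                          rcases eq_or_ne r t with h | h
                          · simp only [h, if_true, if_pos rfl]
                            ring
                          · simp only [if_neg h]
                            ring
                  rw [Finset.sum_congr rfl fun r _ => hr r, Finset.sum_sub_distrib]
                  rw [← Finset.mul_sum]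
                  have : ∑ r, (if r = t then F t * B r j else 0) = F t * B t j := by
                    simp
                  rw [this]
                  ring
              _ = ∑ t, F t * ((if t = j then 1 else 0) - B t j) := by
                  refine Finset.sum_congr rfl fun t _ => ?_
                  rw [hinv t j]
      _ = ∑ α, p α j * fa α := by
          have h1 : ∑ t, F t * ((if t = j then 1 else 0) - B t j)
              = F j - ∑ t, F t * B t j := by
            have ht : ∀ t, F t * ((if t = j then 1 else 0) - B t j)
                = (if t = j then F t else 0) - F t * B t j := by
              intro t
              rcases eq_or_ne t j with h | h
              · subst h
                rw [if_pos rfl, if_pos rfl]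
                ring
              · simp only [if_neg h]
                ring
            rw [Finset.sum_congr rfl fun t _ => ht t, Finset.sum_sub_distrib]
            congr 1
            simp
          rw [h1]
          have h2 : ∑ r, B r j * F r = ∑ t, F t * B t j :=
            Finset.sum_congr rfl fun t _ => by ring
          rw [h2, hF j]
          have h3 : ∑ β, fa β * p β j = ∑ α, p α j * fa α :=
            Finset.sum_congr rfl fun β _ => by ring
          rw [h3]
          ring
  rw [step1, hXU2, hU1sum, hfinal]
  ring

lemma solveI {n : ℕ} (Gx B : Matrix (Fin n) (Fin n) ℝ) (I Bj : Fin n → ℝ)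
    (g' : Fin n → Fin n → ℝ)
    (hBsym : ∀ a b, B a b = B b a) (hGxsym : ∀ a b, Gx a b = Gx b a)
    (hinv : ∀ a b, ∑ r, Gx a r * B r b = if a = b then 1 else 0)
    (hrel : ∀ k, ∑ r, (Gx k r * I r + Bj r * g' k r) = 0) (a : Fin n) :
    I a = -∑ t, ∑ r, B a t * g' t r * Bj r := by
  classical
  have h0 : ∑ t, B a t * ∑ r, (Gx t r * I r + Bj r * g' t r) = 0 := by
    rw [Finset.sum_congr rfl fun t _ => by rw [hrel t, mul_zero]]
    simp
  have h1 : ∑ t, B a t * ∑ r, (Gx t r * I r + Bj r * g' t r)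
      = (∑ r, (∑ t, Gx r t * B t a) * I r) + ∑ t, ∑ r, B a t * g' t r * Bj r := by
    calc ∑ t, B a t * ∑ r, (Gx t r * I r + Bj r * g' t r)
        = ∑ t, ∑ r, (Gx r t * B t a * I r + B a t * g' t r * Bj r) := by
          refine Finset.sum_congr rfl fun t _ => ?_
          rw [Finset.mul_sum]
          refine Finset.sum_congr rfl fun r _ => ?_
          rw [hGxsym r t, hBsym t a]
          ring
      _ = (∑ t, ∑ r, Gx r t * B t a * I r) + ∑ t, ∑ r, B a t * g' t r * Bj r := by
          simp only [Finset.sum_add_distrib]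
      _ = _ := by
          congr 1
          rw [Finset.sum_comm]
          refine Finset.sum_congr rfl fun r _ => ?_
          rw [Finset.sum_mul]
  have h2 : ∑ r, (∑ t, Gx r t * B t a) * I r = I a := by
    have : ∀ r, (∑ t, Gx r t * B t a) * I r = (if r = a then 1 else 0) * I r := by
      intro r; rw [hinv r a]
    rw [Finset.sum_congr rfl fun r _ => this r]
    simp
  have := h1.symm.trans h0
  rw [h2] at this
  linarith

lemma algebra2 {n : ℕ} (B : Matrix (Fin n) (Fin n) ℝ) (pa : Fin n → ℝ)
    (qa : Fin n → Fin n → ℝ) (J : Fin n → Fin n → ℝ) (s' F : Fin n → ℝ) (s0 c : ℝ)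
    (hmain : s0 * ∑ i, ∑ l, B i l * qa l i = c + ∑ t, F t * pa t)
    (hinner : ∀ j, ∑ i, (s0 * J i j + B i j * s' i) = -F j) :
    ∑ i, (s0 * ∑ j, (B i j * qa j i + pa j * J i j) + (∑ j, B i j * pa j) * s' i) = c := by
  classical
  have e1 : ∀ i, s0 * ∑ j, (B i j * qa j i + pa j * J i j) + (∑ j, B i j * pa j) * s' i
      = ∑ j, (s0 * (B i j * qa j i) + pa j * (s0 * J i j + B i j * s' i)) := by
    intro i
    rw [Finset.mul_sum, Finset.sum_mul, ← Finset.sum_add_distrib]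
    refine Finset.sum_congr rfl fun jj _ => by ring
  calc ∑ i, (s0 * ∑ j, (B i j * qa j i + pa j * J i j) + (∑ j, B i j * pa j) * s' i)
      = ∑ i, ∑ j, (s0 * (B i j * qa j i) + pa j * (s0 * J i j + B i j * s' i)) := by
        exact Finset.sum_congr rfl fun i _ => e1 i
    _ = (∑ i, ∑ j, s0 * (B i j * qa j i)) + ∑ i, ∑ j, pa j * (s0 * J i j + B i j * s' i) := by
        simp only [Finset.sum_add_distrib]
    _ = s0 * (∑ i, ∑ j, B i j * qa j i) + ∑ j, pa j * ∑ i, (s0 * J i j + B i j * s' i) := by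
        congr 1
        · rw [Finset.mul_sum]
          exact Finset.sum_congr rfl fun i _ => by rw [Finset.mul_sum]
        · rw [Finset.sum_comm]
          exact Finset.sum_congr rfl fun jj _ => by rw [Finset.mul_sum]
    _ = (c + ∑ t, F t * pa t) + ∑ j, pa j * (-F j) := by
        rw [hmain]
        congr 1
        exact Finset.sum_congr rfl fun jj _ => by rw [hinner jj]
    _ = c := by
        have : ∑ t, F t * pa t = ∑ j, pa j * F j :=
          Finset.sum_congr rfl fun t _ => by ring
        rw [this]
        have h2 : ∑ j, pa j * (-F j) = -∑ j, pa j * F j := by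
          rw [← Finset.sum_neg_distrib]
          exact Finset.sum_congr rfl fun jj _ => by ring
        rw [h2]
        ring

end IVaux
open IVaux in
theorem nondivergence_implies_inner_and_divergence {n m : ℕ}
    (Ω : Set (Fin n → ℝ)) (hΩ : IsOpen Ω)
    (u : (Fin n → ℝ) → Fin m → ℝ) (hu : ContDiffOn ℝ 2 u Ω)
    (f : (Fin n → ℝ) → Fin m → ℝ) (hf : ContinuousOn f Ω)
    (hnondiv : ∀ x ∈ Ω, ∀ α : Fin m,
      Real.sqrt (gmet u x).det *
          ∑ i, ∑ j, ginv u x i j * pd (fun z => pd (fun y => u y α) j z) i x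
        = f x α + ∑ j, (∑ β, f x β * pd (fun z => u z β) j x) * pd (fun z => u z α) j x) :
    (∀ x ∈ Ω, ∀ j : Fin n,
      ∑ i, pd (fun y => Real.sqrt (gmet u y).det * ginv u y i j) i x
        = -∑ α, pd (fun z => u z α) j x * f x α) ∧
    (∀ x ∈ Ω, ∀ α : Fin m,
      ∑ i, pd (fun y =>
          Real.sqrt (gmet u y).det * ∑ j, ginv u y i j * pd (fun z => u z α) j y) i x
        = f x α) := by
  classical
  have main : ∀ x ∈ Ω,
      (∀ j : Fin n,
        ∑ i, pd (fun y => Real.sqrt (gmet u y).det * ginv u y i j) i x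
          = -∑ α, pd (fun z => u z α) j x * f x α) ∧
      (∀ α : Fin m,
        ∑ i, pd (fun y =>
            Real.sqrt (gmet u y).det * ∑ j, ginv u y i j * pd (fun z => u z α) j y) i x
          = f x α) := by
    intro x hx
    have hmem : Ω ∈ nhds x := hΩ.mem_nhds hx
    have huα : ∀ α, ContDiffAt ℝ 2 (fun y => u y α) x := fun α =>
      contDiffAt_pi.mp (hu.contDiffAt hmem) α
    -- first derivatives
    have hfd1 : ∀ α, ContDiffAt ℝ 1 (fderiv ℝ (fun z => u z α)) x := fun α =>
      (huα α).fderiv_right (by norm_num)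
    have hPdiff : ∀ (α : Fin m) (k : Fin n),
        DifferentiableAt ℝ (fun y => pd (fun z => u z α) k y) x := by
      intro α k
      exact ((hfd1 α).differentiableAt one_ne_zero).clm_apply (differentiableAt_const _)
    -- named data
    set p : Fin m → Fin n → ℝ := fun α k => pd (fun z => u z α) k x with hpdef
    set q : Fin m → Fin n → Fin n → ℝ :=
      fun α k i => pd (fun y => pd (fun z => u z α) k y) i x with hqdef
    have hP : ∀ α k, HasPD (fun y => pd (fun z => u z α) k y) x (q α k) := fun α k =>
      hasPD_of_differentiableAt (hPdiff α k)
    -- symmetry of second derivatives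
    have hsnd : ∀ α k i, q α k i
        = fderiv ℝ (fderiv ℝ (fun z => u z α)) x (Pi.single i 1) (Pi.single k 1) := by
      intro α k i
      have hdiff : DifferentiableAt ℝ (fderiv ℝ (fun z => u z α)) x :=
        (hfd1 α).differentiableAt one_ne_zero
      have h1 : fderiv ℝ (fun y => fderiv ℝ (fun z => u z α) y (Pi.single k 1)) x
          = (fderiv ℝ (fderiv ℝ (fun z => u z α)) x).flip (Pi.single k 1) := by
        rw [fderiv_clm_apply hdiff (differentiableAt_const _)]
        simp
      show fderiv ℝ (fun y => fderiv ℝ (fun z => u z α) y (Pi.single k 1)) x (Pi.single i 1) = _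
      rw [h1]
      rfl
    have hqsym : ∀ α k i, q α k i = q α i k := by
      intro α k i
      rw [hsnd α k i, hsnd α i k]
      exact (huα α).isSymmSndFDerivAt (by simp) (Pi.single i 1) (Pi.single k 1)
    -- metric entries
    have hgmet : ∀ (y : Fin n → ℝ) (k l : Fin n), gmet u y k l
        = (if k = l then 1 else 0)
          + ∑ α, pd (fun z => u z α) k y * pd (fun z => u z α) l y := by
      intro y k l
      simp [gmet, Jac, pd, Matrix.add_apply, Matrix.one_apply, Matrix.mul_apply,
        Matrix.transpose_apply, Matrix.of_apply]
    set G2 : Fin n → Fin n → Fin n → ℝ :=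
      fun k l i => ∑ α, (p α k * q α l i + p α l * q α k i) with hG2def
    have hG : ∀ k l, HasPD (fun y => gmet u y k l) x (G2 k l) := by
      intro k l
      have h0 := (hasPD_const x ((if k = l then (1:ℝ) else 0))).add
        (HasPD.fun_sum (s := Finset.univ) (fun α _ => (hP α k).mul (hP α l)))
      refine (h0.congr_fun (fun y => (hgmet y k l))).congr_pd (fun i => zero_add _)
    -- positivity
    have hpos : ∀ y, (gmet u y).PosDef := by
      intro y
      have h2 : ((Jac u y)ᵀ * Jac u y).PosSemidef := by
        have h3 := Matrix.posSemidef_conjTranspose_mul_self (Jac u y)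
        rwa [Matrix.conjTranspose_eq_transpose_of_trivial] at h3
      exact Matrix.PosDef.add_posSemidef Matrix.PosDef.one h2
    have hdetpos : ∀ y, 0 < (gmet u y).det := fun y => (hpos y).det_pos
    have hs0pos : 0 < Real.sqrt (gmet u x).det := Real.sqrt_pos.mpr (hdetpos x)
    have hs0sq : Real.sqrt (gmet u x).det * Real.sqrt (gmet u x).det = (gmet u x).det :=
      Real.mul_self_sqrt (le_of_lt (hdetpos x))
    -- inverse identities
    have hmulinv : ∀ (y : Fin n → ℝ) (a b : Fin n),
        ∑ r, gmet u y a r * (gmet u y)⁻¹ r b = if a = b then 1 else 0 := by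
      intro y a b
      have h2 := Matrix.mul_nonsing_inv (gmet u y) (isUnit_iff_ne_zero.mpr (hdetpos y).ne')
      have h3 : (gmet u y * (gmet u y)⁻¹) a b = (1 : Matrix (Fin n) (Fin n) ℝ) a b := by
        rw [h2]
      rw [Matrix.mul_apply, Matrix.one_apply] at h3
      exact h3
    have hGxsym : ∀ a b, gmet u x a b = gmet u x b a := by
      intro a b
      rw [hgmet x a b, hgmet x b a]
      congr 1
      · simp [eq_comm]
      · exact Finset.sum_congr rfl fun α _ => mul_comm _ _
    have hBsym : ∀ a b, (gmet u x)⁻¹ a b = (gmet u x)⁻¹ b a := by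
      have htr : ((gmet u x)⁻¹)ᵀ = (gmet u x)⁻¹ := by
        rw [Matrix.transpose_nonsing_inv]
        congr 1
        apply Matrix.ext
        intro a b
        rw [Matrix.transpose_apply]
        exact hGxsym b a
      intro a b
      have := congrFun (congrFun htr b) a
      rw [Matrix.transpose_apply] at this
      rw [← this]
    -- ginv entries as adjugate over det
    have hginv_eq : ∀ (y : Fin n → ℝ) (a b : Fin n),
        (gmet u y)⁻¹ a b = ((gmet u y).det)⁻¹ * (gmet u y).adjugate a b := by
      intro y a b
      rw [Matrix.inv_def]
      simp [Ring.inverse_eq_inv', Matrix.smul_apply, smul_eq_mul]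
    have hadjB : ∀ a b, (gmet u x).adjugate a b = (gmet u x).det * (gmet u x)⁻¹ a b := by
      intro a b
      rw [hginv_eq x a b, ← mul_assoc, mul_inv_cancel₀ (hdetpos x).ne', one_mul]
    -- differentiability of adjugate entries
    have hadjdiff : ∀ k l, DifferentiableAt ℝ (fun y => (gmet u y).adjugate k l) x := by
      intro k l
      have hent : ∀ a b, HasPD (fun y => ((gmet u y).updateRow l (Pi.single k 1)) a b) x
          (fun i => if a = l then 0 else G2 a b i) := by
        intro a b
        rcases eq_or_ne a l with h | h
        · refine ((hasPD_const x ((Pi.single k 1 : Fin n → ℝ) b)).congr_fun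
            (fun y => ?_)).congr_pd (fun i => ?_)
          · rw [Matrix.updateRow_apply, if_pos h]
          · rw [if_pos h]
        · refine ((hG a b).congr_fun (fun y => ?_)).congr_pd (fun i => ?_)
          · rw [Matrix.updateRow_apply, if_neg h]
          · rw [if_neg h]
      have hdet2 := hasPD_det hent
      have heq : (fun y => (gmet u y).adjugate k l)
          = fun y => ((gmet u y).updateRow l (Pi.single k 1)).det :=
        funext fun y => Matrix.adjugate_apply _ k l
      rw [heq]
      exact hdet2.diff
    -- differentiability of ginv entries
    have hginvdiff : ∀ a b, DifferentiableAt ℝ (fun y => (gmet u y)⁻¹ a b) x := by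
      intro a b
      have heq : (fun y => (gmet u y)⁻¹ a b)
          = fun y => ((gmet u y).det)⁻¹ * (gmet u y).adjugate a b :=
        funext fun y => hginv_eq y a b
      rw [heq]
      exact ((hasPD_det hG).diff.inv (hdetpos x).ne').mul (hadjdiff a b)
    set I2 : Fin n → Fin n → Fin n → ℝ :=
      fun a b c => pd (fun y => (gmet u y)⁻¹ a b) c x with hI2def
    have hI : ∀ a b, HasPD (fun y => (gmet u y)⁻¹ a b) x (I2 a b) := fun a b =>
      hasPD_of_differentiableAt (hginvdiff a b)
    -- relation from g * g⁻¹ = 1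
    have hrel : ∀ (k j i' : Fin n),
        ∑ r, (gmet u x k r * I2 r j i' + (gmet u x)⁻¹ r j * G2 k r i') = 0 := by
      intro k j i'
      have hPDsum : HasPD (fun y => ∑ r, gmet u y k r * (gmet u y)⁻¹ r j) x
          (fun i'' => ∑ r, (gmet u x k r * I2 r j i'' + (gmet u x)⁻¹ r j * G2 k r i'')) :=
        HasPD.fun_sum (fun r _ => (hG k r).mul (hI r j))
      have hconst : HasPD (fun y => ∑ r, gmet u y k r * (gmet u y)⁻¹ r j) x
          (fun _ => 0) :=
        (hasPD_const x (if k = j then (1:ℝ) else 0)).congr_fun (fun y => hmulinv y k j)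
      exact (hPDsum.pd_eq i').symm.trans (hconst.pd_eq i')
    -- solve for I2
    have hIfor : ∀ (a j i' : Fin n), I2 a j i'
        = -∑ t, ∑ r, (gmet u x)⁻¹ a t * G2 t r i' * (gmet u x)⁻¹ r j := by
      intro a j i'
      exact solveI (gmet u x) (gmet u x)⁻¹ (fun r => I2 r j i')
        (fun r => (gmet u x)⁻¹ r j) (fun t r => G2 t r i')
        hBsym hGxsym (fun a b => hmulinv x a b) (fun k => hrel k j i') a
    -- sqrt of det
    set s2 : Fin n → ℝ := fun i =>
      (∑ l, ∑ r, (gmet u x).adjugate l r * G2 r l i) / (2 * Real.sqrt (gmet u x).det)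
      with hs2def
    have hs : HasPD (fun y => Real.sqrt (gmet u y).det) x s2 :=
      (hasPD_det hG).sqrt (hdetpos x).ne'
    have hs2eq : ∀ i, s2 i
        = (Real.sqrt (gmet u x).det / 2) * ∑ l, ∑ r, (gmet u x)⁻¹ l r * G2 r l i := by
      intro i
      have h1 : ∑ l, ∑ r, (gmet u x).adjugate l r * G2 r l i
          = (gmet u x).det * ∑ l, ∑ r, (gmet u x)⁻¹ l r * G2 r l i := by
        rw [Finset.mul_sum]
        refine Finset.sum_congr rfl fun l _ => ?_
        rw [Finset.mul_sum]
        refine Finset.sum_congr rfl fun r _ => ?_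
        rw [hadjB l r]
        ring
      rw [hs2def]
      show (∑ l, ∑ r, (gmet u x).adjugate l r * G2 r l i)
          / (2 * Real.sqrt (gmet u x).det) = _
      rw [h1, ← hs0sq]
      field_simp
      rw [Real.sqrt_sq hs0pos.le]
      ring
    -- the key inner-variation identity
    have hkey : ∀ j : Fin n,
        ∑ i, (Real.sqrt (gmet u x).det * I2 i j i + (gmet u x)⁻¹ i j * s2 i)
          = -(∑ β, f x β * pd (fun z => u z β) j x) := by
      intro j
      have halg := algebra1 (gmet u x)⁻¹ (gmet u x) p q (Real.sqrt (gmet u x).det)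
        (fun α => f x α) (fun t => ∑ β, f x β * p β t)
        hBsym hqsym (fun a b => hmulinv x a b) (fun a b => hgmet x a b)
        (fun t => rfl) (fun α => hnondiv x hx α) j
      calc ∑ i, (Real.sqrt (gmet u x).det * I2 i j i + (gmet u x)⁻¹ i j * s2 i)
          = ∑ i, (Real.sqrt (gmet u x).det *
              (-∑ t, ∑ r, (gmet u x)⁻¹ i t * (∑ α, (p α t * q α r i + p α r * q α t i))
                * (gmet u x)⁻¹ r j)
            + (gmet u x)⁻¹ i j * ((Real.sqrt (gmet u x).det / 2)
              * ∑ l, ∑ r, (gmet u x)⁻¹ l r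
                * (∑ α, (p α r * q α l i + p α l * q α r i)))) := by
            refine Finset.sum_congr rfl fun i _ => ?_
            rw [hIfor i j i, hs2eq i]
        _ = -∑ α, p α j * f x α := halg
        _ = -(∑ β, f x β * pd (fun z => u z β) j x) := by
            congr 1
            exact Finset.sum_congr rfl fun β _ => mul_comm _ _
    constructor
    · -- inner variation identity
      intro j
      calc ∑ i, pd (fun y => Real.sqrt (gmet u y).det * ginv u y i j) i x
          = ∑ i, (Real.sqrt (gmet u x).det * I2 i j i + (gmet u x)⁻¹ i j * s2 i) := by
            refine Finset.sum_congr rfl fun i _ => ?_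
            exact (hs.mul (hI i j)).pd_eq i
        _ = -(∑ β, f x β * pd (fun z => u z β) j x) := hkey j
        _ = -∑ α, pd (fun z => u z α) j x * f x α := by
            congr 1
            exact Finset.sum_congr rfl fun β _ => mul_comm _ _
    · -- divergence form
      intro α
      calc ∑ i, pd (fun y =>
              Real.sqrt (gmet u y).det * ∑ j, ginv u y i j * pd (fun z => u z α) j y) i x
          = ∑ i, (Real.sqrt (gmet u x).det
              * ∑ j, ((gmet u x)⁻¹ i j * q α j i + p α j * I2 i j i)
            + (∑ j, (gmet u x)⁻¹ i j * p α j) * s2 i) := by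
            refine Finset.sum_congr rfl fun i _ => ?_
            exact (hs.mul (HasPD.fun_sum (fun j _ => (hI i j).mul (hP α j)))).pd_eq i
        _ = f x α := by
            exact algebra2 (gmet u x)⁻¹ (fun j => p α j) (fun j i => q α j i)
              (fun i j => I2 i j i) s2 (fun t => ∑ β, f x β * p β t)
              (Real.sqrt (gmet u x).det) (f x α)
              (hnondiv x hx α) hkey
  exact ⟨fun x hx j => (main x hx).1 j, fun x hx α => (main x hx).2 α⟩
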